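/- The average codeword length of the Fibonacci distribution under the anti-uniform code equals (f_{n+3} - 3)/f_{n+1}, i.e., sum_{i=1}^{n-1} i · f_{n-i}/f_{n+1} + (n-1) · f_2/f_{n+1} = (f_{n+3} - 3)/f_{n+1}. -/
import Mathlib


open Finset

/-- Average length of the anti-uniform code (lengths `1,2,…,n-1,n-1`) on `n` symbols. -/
noncomputable def avgLen (n : ℕ) (p : ℕ → ℝ) : ℝ :=
  ∑ i ∈ Finset.Icc 1 (n - 1), (i : ℝ) * p i + ((n : ℝ) - 1) * p n

/-- The Fibonacci distribution on `n` symbols. -/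
noncomputable def fibDist (n : ℕ) : ℕ → ℝ := fun i =>
  if i = n then (Nat.fib 2 : ℝ) / (Nat.fib (n + 1) : ℝ)
  else (Nat.fib (n - i) : ℝ) / (Nat.fib (n + 1) : ℝ)

private def U (m : ℕ) : ℕ := ∑ i ∈ Finset.range m, (i + 1) * Nat.fib (m - i)

private lemma fib_sum (m : ℕ) :
    ∑ i ∈ Finset.range m, Nat.fib (i + 1) + 1 = Nat.fib (m + 2) := by
  induction m with
  | zero => simp
  | succ k ih =>
    rw [Finset.sum_range_succ]
    have h0 : Nat.fib (k + 1 + 2) = Nat.fib (k + 1) + Nat.fib (k + 2) := by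
      rw [Nat.fib_add_two]
    omega

private lemma fib_sum_rev (m : ℕ) :
    ∑ i ∈ Finset.range m, Nat.fib (m - i) = ∑ i ∈ Finset.range m, Nat.fib (i + 1) := by
  rw [← Finset.sum_range_reflect]
  apply Finset.sum_congr rfl
  intro i hi
  simp only [Finset.mem_range] at hi
  congr 1
  omega

private lemma U_succ (m : ℕ) :
    U (m + 1) = U m + (∑ i ∈ Finset.range m, Nat.fib (m - i)) + Nat.fib (m + 1) := by
  unfold U
  rw [Finset.sum_range_succ']
  have h1 : ∀ i ∈ Finset.range m,
      (i + 1 + 1) * Nat.fib (m + 1 - (i + 1)) =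
        (i + 1) * Nat.fib (m - i) + Nat.fib (m - i) := by
    intro i hi
    have : m + 1 - (i + 1) = m - i := by omega
    rw [this]; ring
  rw [Finset.sum_congr rfl h1, Finset.sum_add_distrib]
  simp

private lemma U_eq (m : ℕ) : U m + (m + 3) = Nat.fib (m + 4) := by
  induction m with
  | zero => simp [U]; decide
  | succ k ih =>
    rw [U_succ k, fib_sum_rev]
    have h1 := fib_sum k
    have h2 : Nat.fib (k + 1 + 4) = Nat.fib (k + 3) + Nat.fib (k + 4) := by
      show Nat.fib (k + 3 + 2) = _
      rw [Nat.fib_add_two]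
    have h3 : Nat.fib (k + 4) = Nat.fib (k + 2) + Nat.fib (k + 3) := Nat.fib_add_two
    have h4 : Nat.fib (k + 3) = Nat.fib (k + 1) + Nat.fib (k + 2) := Nat.fib_add_two
    omega

private lemma S_eq (n : ℕ) (hn : 2 ≤ n) :
    ∑ i ∈ Finset.Icc 1 (n - 1), i * Nat.fib (n - i) + (n + 2) = Nat.fib (n + 3) := by
  have hIcc : Finset.Icc 1 (n - 1) = Finset.Ico 1 n := by
    ext x
    simp only [Finset.mem_Icc, Finset.mem_Ico]
    omega
  rw [hIcc, Finset.sum_Ico_eq_sum_range]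
  have h1 : ∀ i ∈ Finset.range (n - 1),
      (1 + i) * Nat.fib (n - (1 + i)) = (i + 1) * Nat.fib (n - 1 - i) := by
    intro i hi
    have e1 : n - (1 + i) = n - 1 - i := by omega
    rw [e1, add_comm 1 i]
  rw [Finset.sum_congr rfl h1]
  have := U_eq (n - 1)
  have e3 : n - 1 + 4 = n + 3 := by omega
  rw [e3] at this
  unfold U at this
  omega

/-- The average anti-uniform code length of the Fibonacci distribution equals
`(f (n+3) - 3) / f (n+1)`. -/
theorem avgLen_fibDist (n : ℕ) (hn : 2 ≤ n) :
    avgLen n (fibDist n) = ((Nat.fib (n + 3) : ℝ) - 3) / (Nat.fib (n + 1) : ℝ) := by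
  have hF : (0 : ℝ) < (Nat.fib (n + 1) : ℝ) := by
    exact_mod_cast Nat.fib_pos.mpr (by omega)
  have hS := S_eq n hn
  have hcast : ((∑ i ∈ Finset.Icc 1 (n - 1), i * Nat.fib (n - i) : ℕ) : ℝ) + ((n : ℝ) + 2)
      = (Nat.fib (n + 3) : ℝ) := by exact_mod_cast hS
  push_cast at hcast
  unfold avgLen
  have h1 : ∀ i ∈ Finset.Icc 1 (n - 1), (i : ℝ) * fibDist n i =
      ((i : ℝ) * (Nat.fib (n - i) : ℝ)) / (Nat.fib (n + 1) : ℝ) := by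
    intro i hi
    simp only [Finset.mem_Icc] at hi
    have hne : i ≠ n := by omega
    simp [fibDist, hne]
    ring
  rw [Finset.sum_congr rfl h1, ← Finset.sum_div]
  have h2 : fibDist n n = 1 / (Nat.fib (n + 1) : ℝ) := by
    simp [fibDist]
  rw [h2]
  field_simp
  linarith [hcast]
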